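/- arXiv:2203.05522 — 3 statements merged into one kernel-verified Lean document; each statement's English description precedes it below -/
import Mathlib

section
/- In a finite strongly-reachable weighted graph where every vertex has an outgoing edge, the limit average weight of any infinite path starting at a vertex x is bounded below by the minimum cycle mean among cycles reachable from x, and bounded above by the maximum cycle mean among cycles reachable from x. -/
open Finset Filter

lemma pigeon_aux {V : Type*} [Fintype V] (σ : ℕ → V) :
    ∃ i j, i < j ∧ j ≤ Fintype.card V ∧ σ i = σ j := by
  have h : (Finset.univ : Finset V).card < (Finset.range (Fintype.card V + 1)).card := by
    simp
  obtain ⟨a, ha, b, hb, hab, heq⟩ :=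
    Finset.exists_ne_map_eq_of_card_lt_of_maps_to h (fun a _ => Finset.mem_univ (σ a))
  simp only [Finset.mem_range] at ha hb
  rcases lt_or_gt_of_ne hab with h' | h'
  · exact ⟨a, b, h', by omega, heq⟩
  · exact ⟨b, a, h', by omega, heq.symm⟩

lemma reach_aux {V : Type*} (E : V → V → Prop) (x : V) (σ : ℕ → V) (n : ℕ)
    (h0 : Relation.ReflTransGen E x (σ 0)) (hE : ∀ i < n, E (σ i) (σ (i + 1))) :
    ∀ k, k ≤ n → Relation.ReflTransGen E x (σ k) := by
  intro k
  induction k with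
  | zero => intro _; exact h0
  | succ k ih => intro hk; exact (ih (by omega)).tail (hE k (by omega))

lemma key_aux {V : Type*} [Fintype V] (E : V → V → Prop) (γ : V → V → ℝ) (x : V)
    (B m : ℝ) (hB0 : 0 ≤ B) (hB : ∀ u v, -B ≤ γ u v)
    (hm : ∀ (c : ℕ → V) (p : ℕ), 1 ≤ p → c p = c 0 → (∀ i < p, E (c i) (c (i + 1))) →
      Relation.ReflTransGen E x (c 0) →
      m * p ≤ ∑ i ∈ Finset.range p, γ (c i) (c (i + 1))) :
    ∀ n (σ : ℕ → V), Relation.ReflTransGen E x (σ 0) → (∀ i < n, E (σ i) (σ (i + 1))) →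
      m * n - (Fintype.card V) * (B + |m|) ≤ ∑ i ∈ Finset.range n, γ (σ i) (σ (i + 1)) := by
  intro n
  induction n using Nat.strong_induction_on with
  | _ n IH =>
  intro σ h0 hE
  by_cases hn : n ≤ Fintype.card V
  · -- base case: crude bound
    have hsum : -(n : ℝ) * B ≤ ∑ i ∈ Finset.range n, γ (σ i) (σ (i + 1)) := by
      calc -(n : ℝ) * B = ∑ _i ∈ Finset.range n, (-B) := by
            rw [Finset.sum_const, Finset.card_range]; ring
        _ ≤ _ := Finset.sum_le_sum fun i _ => hB _ _
    have h1 : m * n ≤ |m| * n := by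
      have := le_abs_self m
      have : m * n ≤ |m| * n := by
        apply mul_le_mul_of_nonneg_right this (by positivity)
      exact this
    have hcard : (n : ℝ) ≤ (Fintype.card V : ℝ) := by exact_mod_cast hn
    nlinarith [abs_nonneg m]
  · push_neg at hn
    obtain ⟨i, j, hij, hjcard, hσij⟩ := pigeon_aux σ
    set d := j - i with hd
    have hd1 : 1 ≤ d := by omega
    have hjn : j < n := by omega
    have hid : i + d = j := by omega
    set τ : ℕ → V := fun k => if k < i then σ k else σ (k + d) with hτ
    have hτeq : ∀ k ≤ i, τ k = σ k := by
      intro k hk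
      rcases lt_or_eq_of_le hk with h | h
      · simp [hτ, h]
      · subst h; simp only [hτ, lt_irrefl, if_neg (lt_irrefl k)]
        rw [hid, ← hσij]
    have hτ0 : τ 0 = σ 0 := hτeq 0 (Nat.zero_le i)
    have hτge : ∀ k, i ≤ k → τ k = σ (k + d) := by
      intro k hk; simp [hτ, Nat.not_lt.mpr hk]
    -- edges of τ
    have hτE : ∀ k < n - d, E (τ k) (τ (k + 1)) := by
      intro k hk
      by_cases h : k < i
      · rw [hτeq k (by omega), hτeq (k+1) (by omega)]
        exact hE k (by omega)
      · rw [hτge k (by omega), hτge (k+1) (by omega)]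
        have : k + 1 + d = (k + d) + 1 := by omega
        rw [this]
        exact hE (k + d) (by omega)
    -- IH application
    have hIH := IH (n - d) (by omega) τ (hτ0 ▸ h0) hτE
    -- cycle bound
    have hcyc := hm (fun k => σ (i + k)) d (hd1)
      (by rw [hid, ← hσij]; simp)
      (fun k hk => by
        have : i + (k + 1) = (i + k) + 1 := by omega
        rw [this]
        exact hE (i + k) (by omega))
      (by simpa using reach_aux E x σ n h0 hE i (by omega))
    -- sum splitting
    set g : ℕ → ℝ := fun k => γ (σ k) (σ (k + 1)) with hg
    have e1 : ∑ k ∈ Finset.range (n - d), γ (τ k) (τ (k + 1))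
        = ∑ k ∈ Finset.range i, g k + ∑ k ∈ Finset.Ico j n, g k := by
      rw [← Finset.sum_range_add_sum_Ico _ (show i ≤ n - d by omega)]
      congr 1
      · apply Finset.sum_congr rfl
        intro k hk
        simp only [Finset.mem_range] at hk
        rw [hτeq k (by omega), hτeq (k+1) (by omega), hg]
      · rw [Finset.sum_Ico_eq_sum_range, Finset.sum_Ico_eq_sum_range]
        have : n - d - i = n - j := by omega
        rw [this]
        apply Finset.sum_congr rfl
        intro k hk
        simp only [Finset.mem_range] at hk
        rw [hτge (i + k) (by omega), hτge (i + k + 1) (by omega)]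
        have h1 : i + k + d = j + k := by omega
        have h2 : i + k + 1 + d = j + k + 1 := by omega
        rw [h1, h2, hg]
    have e2 : ∑ k ∈ Finset.range d, γ (σ (i + k)) (σ (i + (k + 1)))
        = ∑ k ∈ Finset.Ico i j, g k := by
      rw [Finset.sum_Ico_eq_sum_range]
      have : j - i = d := rfl
      rw [this]
      apply Finset.sum_congr rfl
      intro k _
      have : i + (k + 1) = i + k + 1 := by omega
      rw [this, hg]
    have e3 : ∑ k ∈ Finset.range n, g k
        = ∑ k ∈ Finset.range i, g k + ∑ k ∈ Finset.Ico i j, g k + ∑ k ∈ Finset.Ico j n, g k := by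
      rw [add_assoc, Finset.sum_Ico_consecutive _ (by omega : i ≤ j) (by omega : j ≤ n),
        Finset.sum_range_add_sum_Ico _ (by omega : i ≤ n)]
    have hcast : ((n - d : ℕ) : ℝ) = (n : ℝ) - (d : ℝ) := by
      have : d ≤ n := by omega
      push_cast [this]; ring
    rw [hcast] at hIH
    have : (∑ k ∈ Finset.range n, g k)
        = (∑ k ∈ Finset.range (n - d), γ (τ k) (τ (k + 1)))
          + ∑ k ∈ Finset.range d, γ (σ (i + k)) (σ (i + (k + 1))) := by
      rw [e1, e2, e3]; ring
    show m * n - (Fintype.card V) * (B + |m|) ≤ ∑ k ∈ Finset.range n, g k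
    rw [this]
    have : m * d ≤ ∑ k ∈ Finset.range d, γ (σ (i + k)) (σ (i + (k + 1))) := by
      simpa using hcyc
    linarith

/-- In a finite weighted graph where every vertex has an outgoing edge, the limit
average weight of any infinite path from `x` is bounded below by the minimum cycle
mean and above by the maximum cycle mean among cycles reachable from `x`. -/
theorem limAvg_between_cycle_means {V : Type*} [Fintype V]
    (E : V → V → Prop) (γ : V → V → ℝ)
    (hout : ∀ v, ∃ u, E v u)
    (x : V) (ρ : ℕ → V) (hρ0 : ρ 0 = x) (hρ : ∀ i, E (ρ i) (ρ (i + 1))) :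
    sInf {m : ℝ | ∃ (c : ℕ → V) (p : ℕ), 1 ≤ p ∧ c p = c 0 ∧
        (∀ i < p, E (c i) (c (i + 1))) ∧ Relation.ReflTransGen E x (c 0) ∧
        m = (∑ i ∈ Finset.range p, γ (c i) (c (i + 1))) / p}
      ≤ Filter.liminf
          (fun n => (∑ i ∈ Finset.range (n + 1), γ (ρ i) (ρ (i + 1))) / (n + 1))
          Filter.atTop ∧
    Filter.liminf
        (fun n => (∑ i ∈ Finset.range (n + 1), γ (ρ i) (ρ (i + 1))) / (n + 1))
        Filter.atTop
      ≤ sSup {m : ℝ | ∃ (c : ℕ → V) (p : ℕ), 1 ≤ p ∧ c p = c 0 ∧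
          (∀ i < p, E (c i) (c (i + 1))) ∧ Relation.ReflTransGen E x (c 0) ∧
          m = (∑ i ∈ Finset.range p, γ (c i) (c (i + 1))) / p} := by
  have : Nonempty V := ⟨x⟩
  set S : Set ℝ := {m : ℝ | ∃ (c : ℕ → V) (p : ℕ), 1 ≤ p ∧ c p = c 0 ∧
      (∀ i < p, E (c i) (c (i + 1))) ∧ Relation.ReflTransGen E x (c 0) ∧
      m = (∑ i ∈ Finset.range p, γ (c i) (c (i + 1))) / p} with hS
  -- bound B
  obtain ⟨B, hB0, hB⟩ : ∃ B : ℝ, 0 ≤ B ∧ ∀ u v, |γ u v| ≤ B := by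
    refine ⟨Finset.univ.sup' (Finset.univ_nonempty) (fun p : V × V => |γ p.1 p.2|), ?_, ?_⟩
    · exact le_trans (abs_nonneg (γ x x))
        (Finset.le_sup' (fun p : V × V => |γ p.1 p.2|) (Finset.mem_univ (x, x)))
    · intro u v
      exact Finset.le_sup' (fun p : V × V => |γ p.1 p.2|) (Finset.mem_univ (u, v))
  have hBl : ∀ u v, -B ≤ γ u v := fun u v => neg_le_of_abs_le (hB u v)
  have hBu : ∀ u v, γ u v ≤ B := fun u v => le_of_abs_le (hB u v)
  -- reachability along ρ
  have hreachρ : ∀ k, Relation.ReflTransGen E x (ρ k) := by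
    intro k
    induction k with
    | zero => rw [hρ0]
    | succ k ih => exact ih.tail (hρ k)
  -- S nonempty
  have hSne : S.Nonempty := by
    obtain ⟨i, j, hij, _, hρij⟩ := pigeon_aux ρ
    refine ⟨_, fun k => ρ (i + k), j - i, by omega, ?_, ?_, ?_, rfl⟩
    · simp only [Nat.add_zero]
      rw [show i + (j - i) = j by omega, ← hρij]
    · intro k _
      simp only [show i + (k + 1) = (i + k) + 1 by omega]
      exact hρ (i + k)
    · simpa using hreachρ i
  -- bounds on S elements
  have hSmem : ∀ s ∈ S, -B ≤ s ∧ s ≤ B := by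
    rintro s ⟨c, p, hp, _, _, _, rfl⟩
    have hp' : (0 : ℝ) < p := by exact_mod_cast hp
    constructor
    · rw [le_div_iff₀ hp']
      calc -B * p = ∑ _i ∈ Finset.range p, -B := by
            rw [Finset.sum_const, Finset.card_range]; ring
        _ ≤ _ := Finset.sum_le_sum fun i _ => hBl _ _
    · rw [div_le_iff₀ hp']
      calc (∑ i ∈ Finset.range p, γ (c i) (c (i + 1)))
          ≤ ∑ _i ∈ Finset.range p, B := Finset.sum_le_sum fun i _ => hBu _ _
        _ = B * p := by rw [Finset.sum_const, Finset.card_range]; ring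
  have hbdd_below : BddBelow S := ⟨-B, fun s hs => (hSmem s hs).1⟩
  have hbdd_above : BddAbove S := ⟨B, fun s hs => (hSmem s hs).2⟩
  set m := sInf S with hm
  set M := sSup S with hM
  -- key bounds on prefix sums
  have hlow : ∀ n : ℕ, m * n - (Fintype.card V) * (B + |m|)
      ≤ ∑ i ∈ Finset.range n, γ (ρ i) (ρ (i + 1)) := by
    intro n
    refine key_aux E γ x B m hB0 hBl ?_ n ρ (hreachρ 0) (fun i _ => hρ i)
    intro c p hp hcp hcE hcr
    have hp' : (0 : ℝ) < p := by exact_mod_cast hp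
    have : m ≤ (∑ i ∈ Finset.range p, γ (c i) (c (i + 1))) / p :=
      csInf_le hbdd_below ⟨c, p, hp, hcp, hcE, hcr, rfl⟩
    calc m * p ≤ ((∑ i ∈ Finset.range p, γ (c i) (c (i + 1))) / p) * p :=
          mul_le_mul_of_nonneg_right this (le_of_lt hp')
      _ = _ := by field_simp
  have hhigh : ∀ n : ℕ, (∑ i ∈ Finset.range n, γ (ρ i) (ρ (i + 1)))
      ≤ M * n + (Fintype.card V) * (B + |(-M)|) := by
    intro n
    have := key_aux E (fun u v => -γ u v) x B (-M) hB0
      (fun u v => by simpa using hBu u v) ?_ n ρ (hreachρ 0) (fun i _ => hρ i)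
    · rw [Finset.sum_neg_distrib] at this
      linarith
    · intro c p hp hcp hcE hcr
      have hp' : (0 : ℝ) < p := by exact_mod_cast hp
      have : (∑ i ∈ Finset.range p, γ (c i) (c (i + 1))) / p ≤ M :=
        le_csSup hbdd_above ⟨c, p, hp, hcp, hcE, hcr, rfl⟩
      have h2 : (∑ i ∈ Finset.range p, γ (c i) (c (i + 1))) ≤ M * p := by
        calc (∑ i ∈ Finset.range p, γ (c i) (c (i + 1)))
            = ((∑ i ∈ Finset.range p, γ (c i) (c (i + 1))) / p) * p := by field_simp
          _ ≤ M * p := mul_le_mul_of_nonneg_right this (le_of_lt hp')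
      rw [Finset.sum_neg_distrib]
      linarith
  set C : ℝ := (Fintype.card V) * (B + |m|) with hC
  set C' : ℝ := (Fintype.card V) * (B + |(-M)|) with hC'
  have hC0 : 0 ≤ C := by positivity
  have hC'0 : 0 ≤ C' := by positivity
  set a : ℕ → ℝ := fun n => (∑ i ∈ Finset.range (n + 1), γ (ρ i) (ρ (i + 1))) / (n + 1)
    with ha
  have hn1 : ∀ n : ℕ, (0 : ℝ) < (n : ℝ) + 1 := fun n => by positivity
  have hab : ∀ n : ℕ, m - C / (n + 1) ≤ a n := by
    intro n
    have h := hlow (n + 1)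
    rw [ha]
    have heq : m - C / ((n : ℝ) + 1) = (m * ((n : ℝ) + 1) - C) / ((n : ℝ) + 1) := by
      field_simp
    rw [heq, div_le_div_iff_of_pos_right (hn1 n)]
    calc m * ((n : ℝ) + 1) - C = m * ((n + 1 : ℕ) : ℝ) - C := by push_cast; ring
      _ ≤ _ := h
  have hab' : ∀ n : ℕ, a n ≤ M + C' / (n + 1) := by
    intro n
    have h := hhigh (n + 1)
    rw [ha]
    have heq : M + C' / ((n : ℝ) + 1) = (M * ((n : ℝ) + 1) + C') / ((n : ℝ) + 1) := by
      field_simp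
    rw [heq, div_le_div_iff_of_pos_right (hn1 n)]
    calc (∑ i ∈ Finset.range (n + 1), γ (ρ i) (ρ (i + 1)))
        ≤ M * ((n + 1 : ℕ) : ℝ) + C' := h
      _ = M * ((n : ℝ) + 1) + C' := by push_cast; ring
  -- boundedness of a
  have haB : ∀ n, -B ≤ a n ∧ a n ≤ B := by
    intro n
    rw [ha]
    constructor
    · rw [le_div_iff₀ (hn1 n)]
      calc -B * ((n : ℝ) + 1) = ∑ _i ∈ Finset.range (n + 1), -B := by
            rw [Finset.sum_const, Finset.card_range]; push_cast; ring
        _ ≤ _ := Finset.sum_le_sum fun i _ => hBl _ _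
    · rw [div_le_iff₀ (hn1 n)]
      calc (∑ i ∈ Finset.range (n + 1), γ (ρ i) (ρ (i + 1)))
          ≤ ∑ _i ∈ Finset.range (n + 1), B := Finset.sum_le_sum fun i _ => hBu _ _
        _ = B * ((n : ℝ) + 1) := by rw [Finset.sum_const, Finset.card_range]; push_cast; ring
  -- tendsto of bound sequences
  have htC : ∀ c : ℝ, Tendsto (fun n : ℕ => c / ((n : ℝ) + 1)) atTop (nhds 0) := by
    intro c
    have := tendsto_one_div_add_atTop_nhds_zero_nat.const_mul c
    simpa [div_eq_mul_inv, mul_comm, one_div, mul_assoc] using this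
  have htb : Tendsto (fun n : ℕ => m - C / ((n : ℝ) + 1)) atTop (nhds m) := by
    have := (tendsto_const_nhds (x := m) (f := atTop (α := ℕ))).sub (htC C)
    simpa using this
  have htb' : Tendsto (fun n : ℕ => M + C' / ((n : ℝ) + 1)) atTop (nhds M) := by
    have := (tendsto_const_nhds (x := M) (f := atTop (α := ℕ))).add (htC C')
    simpa using this
  constructor
  · -- lower bound
    have h1 : liminf (fun n : ℕ => m - C / ((n : ℝ) + 1)) atTop = m := htb.liminf_eq
    rw [← h1]
    refine Filter.liminf_le_liminf (Filter.Eventually.of_forall hab) ?_ ?_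
    · exact Filter.isBoundedUnder_of ⟨m - C, fun n => by
        have h2 : C / ((n : ℝ) + 1) ≤ C := div_le_self hC0 (by push_cast; linarith)
        simp only [ge_iff_le]; linarith⟩
    · exact Filter.IsBoundedUnder.isCoboundedUnder_ge
        (Filter.isBoundedUnder_of ⟨B, fun n => (haB n).2⟩)
  · -- upper bound
    have h1 : liminf (fun n : ℕ => M + C' / ((n : ℝ) + 1)) atTop = M := htb'.liminf_eq
    rw [← h1]
    refine Filter.liminf_le_liminf (Filter.Eventually.of_forall hab') ?_ ?_
    · exact Filter.isBoundedUnder_of ⟨-B, fun n => (haB n).1⟩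
    · exact Filter.IsBoundedUnder.isCoboundedUnder_ge
        (Filter.isBoundedUnder_of ⟨M + C', fun n => by
          have h2 : C' / ((n : ℝ) + 1) ≤ C' := div_le_self hC'0 (by push_cast; linarith)
          simp only [ge_iff_le]; linarith⟩)
end

section
/- The strongest ℓ-complete abstraction is behaviorally inclusive: every external trace (output sequence) of the concrete transition system S is also an external trace of its ℓ-complete abstraction S_ℓ built with the domino rule. -/
/-- `u` is an `ℓ`-long subword of some trace in `L`. -/
def IsSubword {Y : Type*} (L : Set (ℕ → Y)) (ℓ : ℕ) (u : Fin ℓ → Y) : Prop :=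
  ∃ t ∈ L, ∃ m : ℕ, ∀ j : Fin ℓ, u j = t (m + j.val)

/-- Domino rule: `u'` is obtained from `u` by dropping the first letter and appending one. -/
def Domino {Y : Type*} {ℓ : ℕ} (u u' : Fin ℓ → Y) : Prop :=
  ∀ (i : ℕ) (h : i + 1 < ℓ), u ⟨i + 1, h⟩ = u' ⟨i, Nat.lt_of_succ_lt h⟩

/-- A run of the strongest `ℓ`-complete abstraction of `L`. -/
def IsRun {Y : Type*} (L : Set (ℕ → Y)) (ℓ : ℕ) (r : ℕ → Fin ℓ → Y) : Prop :=
  (∀ n, IsSubword L ℓ (r n)) ∧ (∀ n, Domino (r n) (r (n + 1))) ∧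
    (∃ t ∈ L, ∀ j : Fin ℓ, r 0 j = t j.val)

/-- Behavioural inclusion: every trace of the concrete system is an output trace
of its strongest `ℓ`-complete abstraction. -/
theorem slca_behavioural_inclusion {Y : Type*} (L : Set (ℕ → Y)) (ℓ : ℕ) (hℓ : 0 < ℓ) :
    ∀ t ∈ L, ∃ r : ℕ → Fin ℓ → Y, IsRun L ℓ r ∧ ∀ n, r n ⟨0, hℓ⟩ = t n := by
  intro t ht
  refine ⟨fun n j => t (n + j.val), ⟨fun n => ⟨t, ht, n, fun j => rfl⟩,
    fun n i h => by simp [Nat.add_assoc, Nat.add_comm 1 i],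
    ⟨t, ht, fun j => by simp⟩⟩, fun n => by simp⟩
end

section
/- For the ℓ-complete abstraction built by the domino rule, increasing ℓ refines the abstraction: every output trace of S_{ℓ+1} is also an output trace of S_ℓ, i.e., B(S_{ℓ+1}) ⊆ B(S_ℓ). -/
/-- `y` is an infinite output trace of the `ℓ`-complete abstraction. -/
def InBehaviour {Y : Type*} (L : Set (ℕ → Y)) (ℓ : ℕ) (hℓ : 0 < ℓ) (y : ℕ → Y) : Prop :=
  ∃ r : ℕ → Fin ℓ → Y, IsRun L ℓ r ∧ ∀ n, y n = r n ⟨0, hℓ⟩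

/-- Increasing `ℓ` refines the abstraction: `B(S_{ℓ+1}) ⊆ B(S_ℓ)`. -/
theorem slca_refinement {Y : Type*} (L : Set (ℕ → Y)) (ℓ : ℕ) (hℓ : 0 < ℓ) :
    ∀ y : ℕ → Y, InBehaviour L (ℓ + 1) (Nat.succ_pos ℓ) y → InBehaviour L ℓ hℓ y := by
  rintro y ⟨r, ⟨hsub, hdom, t, htL, hinit⟩, hy⟩
  refine ⟨fun n j => r n ⟨j.val, by omega⟩, ⟨?_, ?_, ?_⟩, ?_⟩
  · intro n
    obtain ⟨t, htL, m, hm⟩ := hsub n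
    exact ⟨t, htL, m, fun j => hm ⟨j.val, by omega⟩⟩
  · intro n i h
    exact hdom n i (by omega)
  · exact ⟨t, htL, fun j => hinit ⟨j.val, by omega⟩⟩
  · exact hy
end
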